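/- arXiv:1910.03148 — 2 statements merged into one kernel-verified Lean document; each statement's English description precedes it below -/
import Mathlib

section
/- For each integer n ≥ 2, the matrix σ_n = ((n, 1-n²), (-1, n)) has determinant 1, integer entries, and acting on the upper half-space ℍ³ by Möbius transformations, it sends the point (z_n, t_n) = ((2n²-1)/(2n), 1/(2n)) to the point (0, n). -/
open Complex

/-- Height of a 2×2 complex matrix: max of the absolute values of its entries. -/
noncomputable def Hm (M : Matrix (Fin 2) (Fin 2) ℂ) : ℝ :=
  max (max (‖M 0 0‖) (‖M 0 1‖))
      (max (‖M 1 0‖) (‖M 1 1‖))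

/-- The function D(z,t) = max {1, |z|, t⁻¹} on the upper half-space ℍ³. -/
noncomputable def Dht (z : ℂ) (t : ℝ) : ℝ := max 1 (max (‖z‖) t⁻¹)

/-- The generator ω of the ring of integers of ℚ(√-d) over ℤ. -/
noncomputable def omegaD (d : ℕ) : ℂ :=
  if d % 4 = 3 then (-1 + Complex.I * Real.sqrt d) / 2 else Complex.I * Real.sqrt d

/-- The ring of integers O_d = ℤ[ω] of ℚ(√-d), as a subset of ℂ. -/
noncomputable def Od (d : ℕ) : Set ℂ :=
  {z | ∃ a b : ℤ, z = (a : ℂ) + (b : ℂ) * omegaD d}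

/-- ⟨α, β⟩ = O_d : α and β generate the unit ideal of O_d. -/
def IsCoprimePair (d : ℕ) (α β : ℂ) : Prop :=
  ∃ x ∈ Od d, ∃ y ∈ Od d, α * x + β * y = 1

/-- The Möbius action of a matrix of SL(2,ℂ) on the upper half-space ℍ³. -/
noncomputable def mob (M : Matrix (Fin 2) (Fin 2) ℂ) (z : ℂ) (t : ℝ) : ℂ × ℝ :=
  (((M 0 0 * z + M 0 1) * ((starRingEnd ℂ) (M 1 0) * (starRingEnd ℂ) z + (starRingEnd ℂ) (M 1 1))
        + M 0 0 * (starRingEnd ℂ) (M 1 0) * (t : ℂ) ^ 2) /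
      ((((‖M 1 0 * z + M 1 1‖) ^ 2 + (‖M 1 0‖) ^ 2 * t ^ 2 : ℝ)) : ℂ),
   t / ((‖M 1 0 * z + M 1 1‖) ^ 2 + (‖M 1 0‖) ^ 2 * t ^ 2))

theorem sigma_n_sends (n : ℕ) (hn : 2 ≤ n) :
    (!![(n : ℂ), 1 - (n : ℂ) ^ 2; -1, (n : ℂ)] : Matrix (Fin 2) (Fin 2) ℂ).det = 1 ∧
    (∃ A : Matrix (Fin 2) (Fin 2) ℤ,
        (!![(n : ℂ), 1 - (n : ℂ) ^ 2; -1, (n : ℂ)] : Matrix (Fin 2) (Fin 2) ℂ)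
          = A.map (fun x => (x : ℂ))) ∧
    mob !![(n : ℂ), 1 - (n : ℂ) ^ 2; -1, (n : ℂ)]
        ((2 * (n : ℂ) ^ 2 - 1) / (2 * (n : ℂ))) (1 / (2 * (n : ℝ))) = (0, (n : ℝ)) := by
  have hn0 : (n:ℝ) ≠ 0 := by positivity
  have hnc : (n:ℂ) ≠ 0 := Nat.cast_ne_zero.2 (by omega)
  refine ⟨?_, ⟨!![(n : ℤ), 1 - (n : ℤ) ^ 2; -1, (n : ℤ)], ?_⟩, ?_⟩
  · rw [Matrix.det_fin_two_of]; ring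
  · ext i j
    fin_cases i <;> fin_cases j <;> simp [Matrix.map]
  · have hz : -(((2:ℂ) * n ^ 2 - 1) / (2 * n)) + n = ((2:ℂ) * n)⁻¹ := by
      field_simp; ring
    have habs : ‖((2:ℂ) * n)⁻¹‖ = (2 * (n:ℝ))⁻¹ := by
      rw [norm_inv, norm_mul, Complex.norm_two, Complex.norm_natCast]
    unfold mob
    simp [Matrix.cons_val_zero, Matrix.cons_val_one, Matrix.head_cons, hz, habs,
      Complex.conj_ofNat]
    constructor
    · left
      field_simp
      ring
    · rw [div_eq_iff (by positivity)]
      field_simp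
      ring
end

section
/- Let f be a positive definite binary Hermitian form with real entries a, d > 0, complex off-diagonal b, and discriminant Δ = ad - |b|² > 0. Define ξ(f) = (-b/a, √Δ/a) ∈ ℍ³, H(f) = max{a, |b|, d}, and D(z,t) = max{1, |z|, t⁻¹}. Then D(ξ(f)) ≤ H(f)/√Δ. -/
open Complex

theorem D_of_xi_le (a d : ℝ) (b : ℂ) (ha : 0 < a) (hd : 0 < d)
    (hΔ : 0 < a * d - (‖b‖) ^ 2) :
    Dht (-(b / (a : ℂ))) (Real.sqrt (a * d - (‖b‖) ^ 2) / a)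
      ≤ max a (max (‖b‖) d) / Real.sqrt (a * d - (‖b‖) ^ 2) := by
  set Δ := a * d - (‖b‖) ^ 2 with hΔdef
  set H := max a (max (‖b‖) d) with hH
  have hs : 0 < Real.sqrt Δ := Real.sqrt_pos.mpr hΔ
  have haH : a ≤ H := le_max_left _ _
  have hbH : ‖b‖ ≤ H := le_trans (le_max_left _ _) (le_max_right _ _)
  have hdH : d ≤ H := le_trans (le_max_right _ _) (le_max_right _ _)
  have hHpos : 0 < H := lt_of_lt_of_le ha haH
  have hΔad : Δ ≤ a * d := by
    have := sq_nonneg (‖b‖); linarith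
  have hsad : Real.sqrt Δ ≤ Real.sqrt (a * d) := Real.sqrt_le_sqrt hΔad
  have hadH : Real.sqrt (a * d) ≤ H := by
    calc Real.sqrt (a * d) ≤ Real.sqrt (H * H) :=
          Real.sqrt_le_sqrt (mul_le_mul haH hdH hd.le hHpos.le)
      _ = H := Real.sqrt_mul_self hHpos.le
  have hsH : Real.sqrt Δ ≤ H := le_trans hsad hadH
  have habs : ‖-(b / (a : ℂ))‖ = ‖b‖ / a := by
    rw [norm_neg, norm_div, Complex.norm_real, Real.norm_eq_abs, abs_of_pos ha]
  have hinv : (Real.sqrt Δ / a)⁻¹ = a / Real.sqrt Δ := by rw [inv_div]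
  unfold Dht
  rw [habs, hinv]
  refine max_le ?_ (max_le ?_ ?_)
  · rw [le_div_iff₀ hs, one_mul]; exact hsH
  · rw [div_le_div_iff₀ ha hs]
    have hbad : ‖b‖ ≤ Real.sqrt (a * d) := by
      have : (‖b‖) ^ 2 ≤ a * d := by linarith
      calc ‖b‖ = Real.sqrt ((‖b‖) ^ 2) := by
            rw [Real.sqrt_sq (norm_nonneg b)]
        _ ≤ Real.sqrt (a * d) := Real.sqrt_le_sqrt this
    calc ‖b‖ * Real.sqrt Δ ≤ Real.sqrt (a * d) * Real.sqrt (a * d) :=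
          mul_le_mul hbad hsad hs.le (Real.sqrt_nonneg _)
      _ = a * d := Real.mul_self_sqrt (by positivity)
      _ ≤ H * a := by nlinarith
  · gcongr
end
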